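/- arXiv:1611.00562 — 2 statements merged into one kernel-verified Lean document; each statement's English description precedes it below -/
import Mathlib

section
/- Let (V,X,d) be a continuity space. The topology generated by (V,X,d) is Kolmogorov (T0) if and only if for all x, y ∈ X, d(x,y) = ⊥ and d(y,x) = ⊥ imply x = y. -/
/-- `y` is well above `x` (written `y ≻ x`): for every `S` with `⨅ S ≤ x`
there is `s ∈ S` with `s ≤ y`. -/
def WellAbove {V : Type*} [CompleteLattice V] (y x : V) : Prop :=
  ∀ S : Set V, sInf S ≤ x → ∃ s ∈ S, s ≤ y

theorem WellAbove.mono {V : Type*} [CompleteLattice V] {a b x : V}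
    (h : WellAbove a x) (hab : a ≤ b) : WellAbove b x := by
  intro S hS
  obtain ⟨s, hs, hsa⟩ := h S hS
  exact ⟨s, hs, hsa.trans hab⟩

/-- A complete lattice `V` together with an addition `add` is a value quantale if it is
completely distributive (expressed via Raney's characterization `y = ⨅ {a | a ≻ y}`),
the set `{a | a ≻ ⊥}` is a filter (nonempty, upward closed, closed under binary meets),
and `add` is associative, commutative, has `⊥` as neutral element and distributes over
arbitrary infima. -/
structure IsValueQuantale (V : Type*) [CompleteLattice V] (add : V → V → V) : Prop where
  raney : ∀ y : V, y = sInf {a | WellAbove a y}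
  wellAbove_bot_nonempty : ∃ a : V, WellAbove a ⊥
  wellAbove_bot_upward : ∀ a b : V, WellAbove a ⊥ → a ≤ b → WellAbove b ⊥
  wellAbove_bot_inf : ∀ a b : V, WellAbove a ⊥ → WellAbove b ⊥ → WellAbove (a ⊓ b) ⊥
  add_assoc : ∀ a b c : V, add (add a b) c = add a (add b c)
  add_comm : ∀ a b : V, add a b = add b a
  add_bot : ∀ a : V, add a ⊥ = a
  add_sInf : ∀ (a : V) (S : Set V), add a (sInf S) = ⨅ s ∈ S, add a s

/-- A value quantale, bundled as a class. -/
class ValueQuantale (V : Type*) extends CompleteLattice V, Add V where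
  isVQ : IsValueQuantale V (· + ·)

/-- `d : X → X → V` is a `V`-space distance (w.r.t. the addition `add`). -/
structure IsVSpaceOn {V : Type*} [CompleteLattice V] (add : V → V → V)
    {X : Type*} (d : X → X → V) : Prop where
  refl : ∀ x, d x x = ⊥
  triangle : ∀ x y z, d x z ≤ add (d x y) (d y z)

/-- The open ball of radius `ε` about `x`: all `y` with `d x y ≺ ε`. -/
def ball {V X : Type*} [CompleteLattice V] (d : X → X → V) (ε : V) (x : X) : Set X :=
  {y | WellAbove ε (d x y)}

/-- `U` is open for the topology generated by a continuity space. -/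
def GenOpen {V X : Type*} [CompleteLattice V] (d : X → X → V) (U : Set X) : Prop :=
  ∀ x ∈ U, ∃ ε : V, WellAbove ε ⊥ ∧ ball d ε x ⊆ U

/-- The topology generated by a continuity space `(V, X, d)`. -/
def genTop {V X : Type*} [ValueQuantale V] (d : X → X → V) : TopologicalSpace X where
  IsOpen := GenOpen d
  isOpen_univ := fun _x _ => by
    obtain ⟨ε, hε⟩ := (ValueQuantale.isVQ (V := V)).wellAbove_bot_nonempty
    exact ⟨ε, hε, Set.subset_univ _⟩
  isOpen_inter := fun U₁ U₂ h₁ h₂ x hx => by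
    obtain ⟨ε₁, hε₁, hb₁⟩ := h₁ x hx.1
    obtain ⟨ε₂, hε₂, hb₂⟩ := h₂ x hx.2
    exact ⟨ε₁ ⊓ ε₂, (ValueQuantale.isVQ (V := V)).wellAbove_bot_inf _ _ hε₁ hε₂,
      fun y hy => ⟨hb₁ (WellAbove.mono hy inf_le_left), hb₂ (WellAbove.mono hy inf_le_right)⟩⟩
  isOpen_sUnion := fun S hS x hx => by
    obtain ⟨U, hU, hxU⟩ := hx
    obtain ⟨ε, hε, hb⟩ := hS U hU x hxU
    exact ⟨ε, hε, hb.trans (Set.subset_sUnion_of_mem hU)⟩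

/-- `Ω S`: the downward-closed families of finite subsets of `S`,
ordered by reverse inclusion. -/
abbrev Omega (S : Type*) := (LowerSet (Finset S))ᵒᵈ

/-- The underlying family of finite subsets of an element of `Ω S`. -/
def Omega.carrier {S : Type*} (A : Omega S) : Set (Finset S) :=
  ((OrderDual.ofDual A : LowerSet (Finset S)) : Set (Finset S))

/-- Construct an element of `Ω S` from a downward-closed family of finite subsets. -/
def Omega.mk {S : Type*} (A : Set (Finset S)) (h : IsLowerSet A) : Omega S :=
  OrderDual.toDual ⟨A, h⟩

/-- Addition on `Ω S`: intersection of the families. -/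
def omegaAdd {S : Type*} (A B : Omega S) : Omega S :=
  Omega.mk (Omega.carrier A ∩ Omega.carrier B)
    ((OrderDual.ofDual A : LowerSet (Finset S)).lower.inter
      (OrderDual.ofDual B : LowerSet (Finset S)).lower)

theorem WellAbove.anti {V : Type*} [CompleteLattice V] {a p q : V}
    (h : WellAbove a p) (hqp : q ≤ p) : WellAbove a q :=
  fun S hS => h S (hS.trans hqp)

theorem WellAbove.le' {V : Type*} [CompleteLattice V] {a p : V}
    (h : WellAbove a p) : p ≤ a := by
  obtain ⟨s, hs, hsa⟩ := h {p} (by simp)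
  simp only [Set.mem_singleton_iff] at hs
  exact hs ▸ hsa

theorem wellAbove_interp {V : Type*} [CompleteLattice V]
    (raney : ∀ y : V, y = sInf {a | WellAbove a y})
    {ε p : V} (h : WellAbove ε p) : ∃ q, WellAbove ε q ∧ WellAbove q p := by
  set S : Set V := {a | ∃ q, WellAbove q p ∧ WellAbove a q} with hSdef
  have hS : sInf S ≤ p := by
    have h1 : ∀ q, WellAbove q p → sInf S ≤ q := by
      intro q hq
      calc sInf S ≤ sInf {a | WellAbove a q} :=
            sInf_le_sInf (fun a ha => ⟨q, hq, ha⟩)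
        _ = q := (raney q).symm
    calc sInf S ≤ sInf {q | WellAbove q p} := le_sInf (fun q hq => h1 q hq)
      _ = p := (raney p).symm
  obtain ⟨a, ⟨q, hqp, haq⟩, haε⟩ := h S hS
  exact ⟨q, haq.mono haε, hqp⟩

theorem vq_add_le_add_left {V : Type*} [ValueQuantale V] {a b : V}
    (h : a ≤ b) (p : V) : p + a ≤ p + b := by
  have vq := ValueQuantale.isVQ (V := V)
  have h2 := vq.add_sInf p {a, b}
  rw [sInf_pair, inf_eq_left.mpr h, iInf_pair] at h2
  rw [h2]; exact inf_le_right

theorem vq_flagg {V : Type*} [ValueQuantale V] {ε p : V} (h : WellAbove ε p) :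
    ∃ δ, WellAbove δ ⊥ ∧ WellAbove ε (p + δ) := by
  have vq := ValueQuantale.isVQ (V := V)
  obtain ⟨q, hεq, hqp⟩ := wellAbove_interp vq.raney h
  have hp : sInf ((fun δ => p + δ) '' {δ | WellAbove δ ⊥}) = p := by
    rw [sInf_image, ← vq.add_sInf p {δ | WellAbove δ ⊥}, ← vq.raney ⊥, vq.add_bot]
  obtain ⟨s, hs, hsq⟩ := hqp _ (hp.le.trans le_rfl)
  obtain ⟨δ, hδ, rfl⟩ := hs
  exact ⟨δ, hδ, hεq.anti hsq⟩

theorem ball_genOpen {V X : Type*} [ValueQuantale V] {d : X → X → V}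
    (hd : IsVSpaceOn (· + · : V → V → V) d) (ε : V) (x : X) :
    GenOpen d (ball d ε x) := by
  intro z hz
  obtain ⟨δ, hδ, hεδ⟩ := vq_flagg hz
  refine ⟨δ, hδ, fun w hw => ?_⟩
  have h1 : d x w ≤ d x z + δ :=
    (hd.triangle x z w).trans (vq_add_le_add_left hw.le' (d x z))
  exact hεδ.anti h1

/-- the topology generated by a continuity space `(V,X,d)` is T0 iff
`d(x,y) = ⊥` and `d(y,x) = ⊥` imply `x = y`. -/
theorem t0_iff {V X : Type*} [ValueQuantale V] (d : X → X → V)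
    (hd : IsVSpaceOn (· + · : V → V → V) d) :
    @T0Space X (genTop d) ↔ ∀ x y : X, d x y = ⊥ → d y x = ⊥ → x = y := by
  have vq := ValueQuantale.isVQ (V := V)
  letI : TopologicalSpace X := genTop d
  constructor
  · intro ht x y hxy hyx
    refine Inseparable.eq ?_
    rw [inseparable_iff_forall_isOpen]
    intro U hU
    constructor
    · intro hx
      obtain ⟨ε, hε, hb⟩ := hU x hx
      exact hb (show WellAbove ε (d x y) by rw [hxy]; exact hε)
    · intro hy
      obtain ⟨ε, hε, hb⟩ := hU y hy
      exact hb (show WellAbove ε (d y x) by rw [hyx]; exact hε)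
  · intro h
    rw [t0Space_iff_inseparable]
    intro x y hsep
    have key : ∀ (a b : X), Inseparable a b → d a b = ⊥ := by
      intro a b hab
      have h1 : ∀ ε ∈ {ε : V | WellAbove ε ⊥}, d a b ≤ ε := by
        intro ε hε
        have hopen : IsOpen (ball d ε a) := ball_genOpen hd ε a
        have ha : a ∈ ball d ε a := show WellAbove ε (d a a) by
          rw [hd.refl a]; exact hε
        have hb : b ∈ ball d ε a := ((inseparable_iff_forall_isOpen.mp hab) _ hopen).mp ha
        exact hb.le'
      have h2 : d a b ≤ sInf {ε : V | WellAbove ε ⊥} := le_sInf h1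
      rwa [← vq.raney ⊥, le_bot_iff] at h2
    exact h x y (key x y hsep) (key y x hsep.symm)
end

section
/- Let (V,X,d) be a continuity space, let d*(x,y) = d(y,x) be its dual, and let d_∨(x,y) = d(x,y) ⊔ d*(x,y). Then (V,X,d_∨) is a continuity space, and the topology generated by (V,X,d_∨) equals the join (supremum) of the topology generated by (V,X,d) and the topology generated by (V,X,d*). -/
section Aux

variable {V : Type*} [ValueQuantale V]

lemma wa_le {a b : V} (h : WellAbove a b) : b ≤ a := by
  obtain ⟨s, hs, hsa⟩ := h {b} sInf_singleton.le
  rw [Set.mem_singleton_iff] at hs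
  exact hs ▸ hsa

lemma wa_mono_right {a b c : V} (h : WellAbove a b) (hcb : c ≤ b) : WellAbove a c :=
  fun S hS => h S (hS.trans hcb)

lemma wa_interpolate {a c : V} (h : WellAbove a c) :
    ∃ b : V, WellAbove a b ∧ WellAbove b c := by
  have hq := (ValueQuantale.isVQ (V := V))
  set S : Set V := {b' | ∃ b, WellAbove b' b ∧ WellAbove b c} with hSdef
  have hS : sInf S ≤ c := by
    have h1 : sInf S ≤ sInf {b : V | WellAbove b c} := by
      apply le_sInf
      intro b hb
      calc sInf S ≤ sInf {b' : V | WellAbove b' b} :=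
            le_sInf (fun b' hb' => sInf_le ⟨b, hb', hb⟩)
        _ = b := (hq.raney b).symm
    exact h1.trans_eq (hq.raney c).symm
  obtain ⟨s, hs, hsa⟩ := h S hS
  obtain ⟨b, hsb, hbc⟩ := hs
  exact ⟨b, hsb.mono hsa, hbc⟩

lemma vq_add_mono_right (a : V) {b c : V} (h : b ≤ c) : a + b ≤ a + c := by
  have hq := (ValueQuantale.isVQ (V := V))
  have key : a + sInf {b, c} = ⨅ s ∈ ({b, c} : Set V), a + s := hq.add_sInf a {b, c}
  rw [sInf_pair, inf_eq_left.mpr h, iInf_pair] at key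
  exact key.le.trans inf_le_right

lemma vq_add_mono {a b c e : V} (h1 : a ≤ b) (h2 : c ≤ e) : a + c ≤ b + e := by
  have hq := (ValueQuantale.isVQ (V := V))
  calc a + c ≤ a + e := vq_add_mono_right a h2
    _ = e + a := hq.add_comm a e
    _ ≤ e + b := vq_add_mono_right e h1
    _ = b + e := hq.add_comm e b

lemma vq_eq_iInf_add (p : V) : p = ⨅ δ ∈ {a : V | WellAbove a ⊥}, p + δ := by
  have hq := (ValueQuantale.isVQ (V := V))
  conv_lhs => rw [← hq.add_bot p, hq.raney ⊥]
  exact hq.add_sInf p _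

/-- If `ε ≻ p` then there is `δ ≻ ⊥` with `ε ≻ p + δ`. -/
lemma exists_wa_add {ε p : V} (h : WellAbove ε p) :
    ∃ δ : V, WellAbove δ ⊥ ∧ WellAbove ε (p + δ) := by
  obtain ⟨b, hεb, hbp⟩ := wa_interpolate h
  have him : sInf ((fun δ => p + δ) '' {a : V | WellAbove a ⊥}) ≤ p := by
    rw [sInf_image]
    exact le_of_eq (vq_eq_iInf_add p).symm
  obtain ⟨s, hs, hsb⟩ := hbp _ him
  obtain ⟨δ, hδ, rfl⟩ := hs
  exact ⟨δ, hδ, wa_mono_right hεb hsb⟩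

/-- Open balls are open. -/
lemma ball_genOpen_s16 {X : Type*} (d2 : X → X → V)
    (htri : ∀ x y z, d2 x z ≤ d2 x y + d2 y z) (ε : V) (x : X) :
    GenOpen d2 (ball d2 ε x) := by
  intro y hy
  obtain ⟨δ, hδ, hεδ⟩ := exists_wa_add hy
  refine ⟨δ, hδ, fun z hz => ?_⟩
  exact wa_mono_right hεδ ((htri x y z).trans (vq_add_mono_right _ (wa_le hz)))

end Aux

/-- for a continuity space `(V,X,d)` with dual `d*(x,y) = d(y,x)`, the
symmetrisation `d∨(x,y) = d(x,y) ⊔ d*(x,y)` is again a `V`-space distance, and the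
topology it generates is the join of the topologies generated by `d` and by `d*`,
i.e. the topology generated from the union of their open sets. -/
theorem sup_symmetrisation {V X : Type*} [ValueQuantale V] (d : X → X → V)
    (hd : IsVSpaceOn (· + · : V → V → V) d) :
    IsVSpaceOn (· + · : V → V → V) (fun x y => d x y ⊔ d y x) ∧
    genTop (fun x y => d x y ⊔ d y x) =
      TopologicalSpace.generateFrom
        {U : Set X | GenOpen d U ∨ GenOpen (fun x y => d y x) U} := by
  have hq := (ValueQuantale.isVQ (V := V))
  set d' : X → X → V := fun x y => d y x with hd'def
  set ds : X → X → V := fun x y => d x y ⊔ d y x with hdsdef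
  have htri' : ∀ x y z, d' x z ≤ d' x y + d' y z := by
    intro x y z
    calc d z x ≤ d z y + d y x := hd.triangle z y x
      _ = d y x + d z y := hq.add_comm _ _
  have hsym : IsVSpaceOn (· + · : V → V → V) ds := by
    constructor
    · intro x; simp [hdsdef, hd.refl]
    · intro x y z
      apply sup_le
      · exact (hd.triangle x y z).trans (vq_add_mono le_sup_left le_sup_left)
      · calc d z x ≤ d z y + d y x := hd.triangle z y x
          _ = d y x + d z y := hq.add_comm _ _
          _ ≤ ds x y + ds y z := vq_add_mono le_sup_right le_sup_right
  refine ⟨hsym, le_antisymm ?_ ?_⟩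
  · apply le_generateFrom
    rintro U (hU | hU) <;> intro x hx
    · obtain ⟨ε, hε, hb⟩ := hU x hx
      exact ⟨ε, hε, fun y hy => hb (wa_mono_right hy le_sup_left)⟩
    · obtain ⟨ε, hε, hb⟩ := hU x hx
      exact ⟨ε, hε, fun y hy => hb (wa_mono_right hy le_sup_right)⟩
  · rw [TopologicalSpace.le_def]
    intro U hU
    set g : Set (Set X) := {U : Set X | GenOpen d U ∨ GenOpen d' U} with hgdef
    letI t : TopologicalSpace X := TopologicalSpace.generateFrom g
    show @IsOpen X t U
    have hcover : ∀ x ∈ U, ∃ W : Set X, @IsOpen X t W ∧ x ∈ W ∧ W ⊆ U := by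
      intro x hx
      obtain ⟨ε, hε, hb⟩ := hU x hx
      obtain ⟨δ, hεδ, hδ⟩ := wa_interpolate hε
      refine ⟨ball d δ x ∩ ball d' δ x, ?_, ⟨?_, ?_⟩, ?_⟩
      · exact TopologicalSpace.GenerateOpen.inter _ _
          (TopologicalSpace.GenerateOpen.basic _ (Or.inl (ball_genOpen_s16 d hd.triangle δ x)))
          (TopologicalSpace.GenerateOpen.basic _ (Or.inr (ball_genOpen_s16 d' htri' δ x)))
      · show WellAbove δ (d x x); rw [hd.refl]; exact hδ
      · show WellAbove δ (d x x); rw [hd.refl]; exact hδ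
      · rintro y ⟨hy1, hy2⟩
        apply hb
        exact wa_mono_right hεδ (sup_le (wa_le hy1) (wa_le hy2))
    choose W hWopen hWmem hWsub using hcover
    have hUeq : U = ⋃ x : U, W x x.2 := by
      ext y
      constructor
      · intro hy; exact Set.mem_iUnion.mpr ⟨⟨y, hy⟩, hWmem y hy⟩
      · intro hy
        obtain ⟨x, hx⟩ := Set.mem_iUnion.mp hy
        exact hWsub x x.2 hx
    rw [hUeq]
    exact isOpen_iUnion (fun x => hWopen x x.2)
end
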